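/- Let n = 2^ℓ, m = 2^d, λ = m/n = 2^{d-ℓ}, and let a be an integer with d ≥ a ≥ max{1, d - ℓ}. Then there exist N and a set S ⊆ F_2^N of m distinct nonzero vectors such that, for a uniformly random linear map h : F_2^N → F_2^ℓ, Pr[|{x ∈ S : h(x) = 0}| > 2^a - 2] ≥ γ^2 λ^a 2^{-a^2}, where γ = ∏_{j=1}^∞ (1 - 2^{-j}). -/

import Mathlib

/-- The space of F_2-linear maps from F_2^N to F_2^ℓ. -/
abbrev Lin (N ℓ : ℕ) := (Fin N → ZMod 2) →ₗ[ZMod 2] (Fin ℓ → ZMod 2)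

/-- γ = ∏_{j=1}^∞ (1 - 2^{-j}). -/
noncomputable def gammaProd : ℝ := ∏' j : ℕ, (1 - (2 : ℝ)⁻¹ ^ (j + 1))

section Gamma

lemma aux_hasProd {f : ℕ → ℝ} (h0 : ∀ i, 0 ≤ f i) (h1 : ∀ i, f i ≤ 1) :
    HasProd f (⨅ s : Finset ℕ, ∏ i ∈ s, f i) := by
  have hanti : Antitone fun s : Finset ℕ => ∏ i ∈ s, f i := by
    intro s t hst
    calc ∏ i ∈ t, f i = (∏ i ∈ t \ s, f i) * ∏ i ∈ s, f i := (Finset.prod_sdiff hst).symm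
      _ ≤ 1 * ∏ i ∈ s, f i := by
          apply mul_le_mul_of_nonneg_right
          · exact Finset.prod_le_one (fun i _ => h0 i) (fun i _ => h1 i)
          · exact Finset.prod_nonneg fun i _ => h0 i
      _ = ∏ i ∈ s, f i := one_mul _
  have hbdd : BddBelow (Set.range fun s : Finset ℕ => ∏ i ∈ s, f i) := by
    refine ⟨0, ?_⟩
    rintro x ⟨s, rfl⟩
    exact Finset.prod_nonneg fun i _ => h0 i
  exact tendsto_atTop_ciInf hanti hbdd

lemma gf_nonneg (j : ℕ) : (0:ℝ) ≤ 1 - (2 : ℝ)⁻¹ ^ (j + 1) := by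
  have : (2:ℝ)⁻¹ ^ (j+1) ≤ 1 := pow_le_one₀ (by norm_num) (by norm_num)
  linarith

lemma gf_le_one (j : ℕ) : (1 - (2 : ℝ)⁻¹ ^ (j + 1)) ≤ 1 := by
  have : (0:ℝ) ≤ (2:ℝ)⁻¹ ^ (j+1) := by positivity
  linarith

lemma gamma_le_prod (s : Finset ℕ) : gammaProd ≤ ∏ j ∈ s, (1 - (2 : ℝ)⁻¹ ^ (j + 1)) := by
  rw [gammaProd, (aux_hasProd gf_nonneg gf_le_one).tprod_eq]
  refine ciInf_le ?_ s
  refine ⟨0, ?_⟩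
  rintro x ⟨t, rfl⟩
  exact Finset.prod_nonneg fun i _ => gf_nonneg i

lemma gamma_nonneg : 0 ≤ gammaProd := by
  rw [gammaProd, (aux_hasProd gf_nonneg gf_le_one).tprod_eq]
  exact le_ciInf fun s => Finset.prod_nonneg fun i _ => gf_nonneg i

lemma gamma_le_one : gammaProd ≤ 1 := by simpa using gamma_le_prod ∅

lemma gamma_bound {k ℓ : ℕ} (hkl : k ≤ ℓ) :
    gammaProd * 2^(ℓ*k) ≤ ∏ i ∈ Finset.range k, ((2:ℝ)^ℓ - 2^i) := by
  set f : ℕ → ℝ := fun j => 1 - (2 : ℝ)⁻¹ ^ (j + 1) with hf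
  have h1 : gammaProd ≤ ∏ j ∈ Finset.range ℓ, f j := gamma_le_prod _
  have h2 : ∏ j ∈ Finset.range ℓ, f j ≤ ∏ j ∈ Finset.Ico (ℓ-k) ℓ, f j := by
    rw [← Finset.prod_range_mul_prod_Ico f (Nat.sub_le ℓ k)]
    apply mul_le_of_le_one_left
    · exact Finset.prod_nonneg fun i _ => gf_nonneg i
    · exact Finset.prod_le_one (fun i _ => gf_nonneg i) (fun i _ => gf_le_one i)
  have h3 : ∏ j ∈ Finset.Ico (ℓ-k) ℓ, f j = ∏ i ∈ Finset.range k, f (ℓ - k + i) := by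
    rw [Finset.prod_Ico_eq_prod_range, Nat.sub_sub_self hkl]
  have h4 : (∏ i ∈ Finset.range k, f (ℓ - k + i)) * 2^(ℓ*k)
      = ∏ i ∈ Finset.range k, ((2:ℝ)^ℓ - 2^(k-1-i)) := by
    have : (2:ℝ)^(ℓ*k) = ∏ _i ∈ Finset.range k, (2:ℝ)^ℓ := by
      rw [Finset.prod_const, ← pow_mul, Finset.card_range]
    rw [this, ← Finset.prod_mul_distrib]
    refine Finset.prod_congr rfl fun i hi => ?_
    rw [Finset.mem_range] at hi
    have he : ℓ - k + i + 1 ≤ ℓ := by omega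
    have : (2:ℝ)⁻¹ ^ (ℓ - k + i + 1) * 2^ℓ = 2^(k-1-i) := by
      rw [inv_pow, inv_mul_eq_div, div_eq_mul_inv, ← pow_sub₀ (2:ℝ) (by norm_num) he]
      congr 1
      omega
    rw [hf]
    simp only []
    rw [sub_mul, one_mul, this]
  have h5 : ∏ i ∈ Finset.range k, ((2:ℝ)^ℓ - 2^(k-1-i)) = ∏ i ∈ Finset.range k, ((2:ℝ)^ℓ - 2^i) :=
    Finset.prod_range_reflect (fun i => (2:ℝ)^ℓ - 2^i) k
  calc gammaProd * 2^(ℓ*k) ≤ (∏ i ∈ Finset.range k, f (ℓ - k + i)) * 2^(ℓ*k) := by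
        apply mul_le_mul_of_nonneg_right (h1.trans (h2.trans h3.le)) (by positivity)
    _ = _ := h4.trans h5

end Gamma

section Count
variable (ℓ k a : ℕ)

/-- The embedding of `F_2^{k+a}` into nonzero vectors of `F_2^{k+a+1}`. -/
noncomputable def fS (x : Fin (k+a) → ZMod 2) : Fin (k+a+1) → ZMod 2 :=
  Fin.snoc x (if x = 0 then 1 else 0)

/-- The set `S`. -/
noncomputable def SS : Finset (Fin (k+a+1) → ZMod 2) :=
  Finset.image (fS k a) Finset.univ

lemma fS_inj : Function.Injective (fS k a) := by
  intro x y h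
  have := congrArg Fin.init h
  simpa [fS, Fin.init_snoc] using this

lemma SS_card : (SS k a).card = 2^(k+a) := by
  rw [SS, Finset.card_image_of_injective _ (fS_inj k a), Finset.card_univ]
  simp [ZMod.card]

lemma SS_zero : (0 : Fin (k+a+1) → ZMod 2) ∉ SS k a := by
  rw [SS]
  simp only [Finset.mem_image, Finset.mem_univ, true_and]
  rintro ⟨x, hx⟩
  by_cases h0 : x = 0
  · have := congrFun hx (Fin.last _)
    simp [fS, h0, Fin.snoc_last] at this
  · apply h0
    have := congrArg Fin.init hx
    exact (by simpa [fS, Fin.init_snoc] using this : x = Fin.init (0 : Fin (k+a+1) → ZMod 2)).trans rfl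

/-- The columns of the linear map built from parameters `(w, c, z)`. -/
noncomputable def colF (w : Fin k → (Fin ℓ → ZMod 2)) (c : Fin a → Fin k → ZMod 2)
    (z : Fin ℓ → ZMod 2) : Fin (k+a+1) → (Fin ℓ → ZMod 2) :=
  Fin.snoc (Fin.append w (fun j => ∑ i, c j i • w i)) z

/-- The linear map built from parameters `(w, c, z)`. -/
noncomputable def Phi (w : Fin k → (Fin ℓ → ZMod 2)) (c : Fin a → Fin k → ZMod 2)
    (z : Fin ℓ → ZMod 2) : Lin (k+a+1) ℓ :=
  (Pi.basisFun (ZMod 2) (Fin (k+a+1))).constr ℕ (colF ℓ k a w c z)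

lemma Phi_apply (w : Fin k → (Fin ℓ → ZMod 2)) (c : Fin a → Fin k → ZMod 2)
    (z : Fin ℓ → ZMod 2) (v : Fin (k+a+1) → ZMod 2) :
    Phi ℓ k a w c z v = ∑ i, v i • colF ℓ k a w c z i := by
  rw [Phi, Module.Basis.constr_apply_fintype]
  simp [Pi.basisFun_equivFun]

/-- Vectors in the kernel of `Phi`. -/
noncomputable def gT (c : Fin a → Fin k → ZMod 2) (t : Fin a → ZMod 2) : Fin (k+a) → ZMod 2 :=
  Fin.append (fun i => ∑ j, t j * c j i) t

lemma gT_natAdd (c : Fin a → Fin k → ZMod 2) (t : Fin a → ZMod 2) (j : Fin a) :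
    gT k a c t (Fin.natAdd k j) = t j := by
  simp [gT, Fin.append_right]

lemma gT_ne_zero (c : Fin a → Fin k → ZMod 2) {t : Fin a → ZMod 2} (ht : t ≠ 0) :
    gT k a c t ≠ 0 := by
  intro h
  apply ht
  funext j
  have := congrFun h (Fin.natAdd k j)
  simpa [gT_natAdd] using this

lemma Phi_kernel (w : Fin k → (Fin ℓ → ZMod 2)) (c : Fin a → Fin k → ZMod 2)
    (z : Fin ℓ → ZMod 2) (t : Fin a → ZMod 2) :
    Phi ℓ k a w c z (Fin.snoc (gT k a c t) 0) = 0 := by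
  rw [Phi_apply, Fin.sum_univ_castSucc]
  simp only [Fin.snoc_castSucc, Fin.snoc_last, zero_smul, add_zero, colF]
  rw [Fin.sum_univ_add]
  simp only [Fin.append_left, Fin.append_right, gT]
  simp only [Finset.sum_smul, Finset.smul_sum, smul_smul]
  have e1 : ∑ x : Fin k, ∑ j : Fin a, (t j * c j x) • w x
      = ∑ j : Fin a, ∑ x : Fin k, (t j * c j x) • w x := Finset.sum_comm
  rw [e1, ← Finset.sum_add_distrib]
  refine Finset.sum_eq_zero fun j _ => ?_
  rw [← Finset.sum_add_distrib]
  refine Finset.sum_eq_zero fun i _ => ?_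
  rw [← add_smul]
  convert zero_smul (ZMod 2) _
  exact CharTwo.add_self_eq_zero _

lemma event (w : Fin k → (Fin ℓ → ZMod 2)) (c : Fin a → Fin k → ZMod 2)
    (z : Fin ℓ → ZMod 2) (ha1 : 1 ≤ a) :
    2^a - 2 < ((SS k a).filter (fun x => Phi ℓ k a w c z x = 0)).card := by
  have key : (2:ℕ)^a - 1 ≤ ((SS k a).filter (fun x => Phi ℓ k a w c z x = 0)).card := by
    have hcard : (Finset.univ.erase (0 : Fin a → ZMod 2)).card = 2^a - 1 := by
      rw [Finset.card_erase_of_mem (Finset.mem_univ _), Finset.card_univ]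
      simp [ZMod.card]
    rw [← hcard]
    apply Finset.card_le_card_of_injOn (fun t => fS k a (gT k a c t))
    · intro t htm
      rw [Finset.mem_coe, Finset.mem_erase] at htm
      rw [Finset.mem_coe, Finset.mem_filter]
      constructor
      · exact Finset.mem_image_of_mem _ (Finset.mem_univ _)
      · beta_reduce
        rw [fS, if_neg (gT_ne_zero k a c htm.1)]
        exact Phi_kernel ℓ k a w c z t
    · intro t1 _ t2 _ h
      have h2 := fS_inj k a h
      funext j
      have := congrFun h2 (Fin.natAdd k j)
      simpa [gT_natAdd] using this
  have h2 : 2 ≤ 2^a := by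
    calc 2 = 2^1 := (pow_one 2).symm
    _ ≤ 2^a := Nat.pow_le_pow_right (by norm_num) ha1
  omega

lemma Phi_inj : Function.Injective
    (fun tp : {s : Fin k → (Fin ℓ → ZMod 2) // LinearIndependent (ZMod 2) s} ×
        ((Fin a → Fin k → ZMod 2) × (Fin ℓ → ZMod 2)) =>
      Phi ℓ k a tp.1.1 tp.2.1 tp.2.2) := by
  rintro ⟨⟨w, hw⟩, c, z⟩ ⟨⟨w', hw'⟩, c', z'⟩ h
  simp only at h
  have hcol : colF ℓ k a w c z = colF ℓ k a w' c' z' := by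
    funext i
    have := congrArg (fun φ => φ ((Pi.basisFun (ZMod 2) (Fin (k+a+1))) i)) h
    simpa only [Phi, Module.Basis.constr_basis] using this
  have hz : z = z' := by
    have := congrFun hcol (Fin.last _)
    simpa [colF, Fin.snoc_last] using this
  have happ : Fin.append w (fun j => ∑ i, c j i • w i)
      = Fin.append w' (fun j => ∑ i, c' j i • w' i) := by
    funext i
    have := congrFun hcol (Fin.castSucc i)
    simpa [colF, Fin.snoc_castSucc] using this
  have hww : w = w' := by
    funext i
    have := congrFun happ (Fin.castAdd a i)
    simpa [Fin.append_left] using this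
  subst hww hz
  have hcc : c = c' := by
    funext j
    have hsum : ∑ i, c j i • w i = ∑ i, c' j i • w i := by
      have := congrFun happ (Fin.natAdd k j)
      simpa [Fin.append_right] using this
    have hli := Fintype.linearIndependent_iff.mp hw (fun i => c j i - c' j i) ?_
    · funext i
      exact sub_eq_zero.mp (hli i)
    · simp only [sub_smul, Finset.sum_sub_distrib, hsum, sub_self]
  subst hcc
  rfl

lemma card_Lin (N : ℕ) : Nat.card (Lin N ℓ) = 2^(ℓ*N) := by
  rw [Nat.card_congr (LinearMap.toMatrix' (R := ZMod 2) (m := Fin ℓ) (n := Fin N)).toEquiv,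
    Nat.card_congr (Matrix.of (m := Fin ℓ) (n := Fin N) (α := ZMod 2)).symm,
    Nat.card_eq_fintype_card]
  simp [Fintype.card_fun, ZMod.card, ← pow_mul, mul_comm]

lemma card_params (hkl : k ≤ ℓ) :
    Nat.card ({s : Fin k → (Fin ℓ → ZMod 2) // LinearIndependent (ZMod 2) s} ×
      ((Fin a → Fin k → ZMod 2) × (Fin ℓ → ZMod 2)))
    = (∏ i : Fin k, (2^ℓ - 2^(i:ℕ))) * (2^(a*k) * 2^ℓ) := by
  rw [Nat.card_prod, Nat.card_prod]
  have hk : k ≤ Module.finrank (ZMod 2) (Fin ℓ → ZMod 2) := by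
    rw [Module.finrank_pi, Fintype.card_fin]; exact hkl
  rw [card_linearIndependent hk]
  simp [Nat.card_eq_fintype_card, Fintype.card_fun, ZMod.card, Module.finrank_pi,
    ← pow_mul, mul_comm]

end Count

lemma main_aux (ℓ k a : ℕ) (ha1 : 1 ≤ a) (hkl : k ≤ ℓ) :
    ∃ S : Finset (Fin (k+a+1) → ZMod 2), S.card = 2^(k+a) ∧
      (0 : Fin (k+a+1) → ZMod 2) ∉ S ∧
      gammaProd ^ 2 * ((2:ℝ)^(k+a) / (2:ℝ)^ℓ) ^ a * ((2 : ℝ) ^ (a ^ 2))⁻¹ ≤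
        (Nat.card {h : Lin (k+a+1) ℓ //
            2 ^ a - 2 < (S.filter (fun x => h x = 0)).card} : ℝ) /
          (Nat.card (Lin (k+a+1) ℓ) : ℝ) := by
  refine ⟨SS k a, SS_card k a, SS_zero k a, ?_⟩
  have hfinLin : Finite (Lin (k+a+1) ℓ) :=
    Finite.of_injective _ (DFunLike.coe_injective (F := Lin (k+a+1) ℓ))
  set P : Lin (k+a+1) ℓ → Prop :=
    fun h => 2 ^ a - 2 < ((SS k a).filter (fun x => h x = 0)).card with hP
  have hinj : Function.Injective
      (fun tp : {s : Fin k → (Fin ℓ → ZMod 2) // LinearIndependent (ZMod 2) s} ×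
          ((Fin a → Fin k → ZMod 2) × (Fin ℓ → ZMod 2)) =>
        (⟨Phi ℓ k a tp.1.1 tp.2.1 tp.2.2,
          event ℓ k a tp.1.1 tp.2.1 tp.2.2 ha1⟩ : {h : Lin (k+a+1) ℓ // P h})) := by
    intro t1 t2 h
    exact Phi_inj ℓ k a (congrArg Subtype.val h)
  have hcount : (∏ i : Fin k, (2^ℓ - 2^(i:ℕ))) * (2^(a*k) * 2^ℓ)
      ≤ Nat.card {h : Lin (k+a+1) ℓ // P h} := by
    rw [← card_params ℓ k a hkl]
    exact Nat.card_le_card_of_injective _ hinj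
  set C : ℕ := Nat.card {h : Lin (k+a+1) ℓ // P h} with hC
  have hAcast : ((∏ i : Fin k, (2^ℓ - 2^(i:ℕ)) : ℕ) : ℝ)
      = ∏ i ∈ Finset.range k, ((2:ℝ)^ℓ - 2^i) := by
    rw [← Fin.prod_univ_eq_prod_range (fun i => ((2:ℝ)^ℓ - 2^i)) k, Nat.cast_prod]
    refine Finset.prod_congr rfl fun i _ => ?_
    have hle : (2:ℕ)^(i:ℕ) ≤ 2^ℓ :=
      Nat.pow_le_pow_right (by norm_num) (le_trans (le_of_lt i.isLt) hkl)
    push_cast [Nat.cast_sub hle]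
    ring
  have hCreal : (∏ i ∈ Finset.range k, ((2:ℝ)^ℓ - 2^i)) * (2^(a*k) * 2^ℓ) ≤ (C:ℝ) := by
    rw [← hAcast]
    exact_mod_cast hcount
  have c1 : gammaProd * 2^(ℓ*k) * ((2:ℝ)^(a*k) * 2^ℓ) ≤ (C:ℝ) := by
    calc gammaProd * 2^(ℓ*k) * ((2:ℝ)^(a*k) * 2^ℓ)
        ≤ (∏ i ∈ Finset.range k, ((2:ℝ)^ℓ - 2^i)) * ((2:ℝ)^(a*k) * 2^ℓ) :=
          mul_le_mul_of_nonneg_right (gamma_bound hkl) (by positivity)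
      _ ≤ (C:ℝ) := hCreal
  have hg2 : gammaProd^2 ≤ gammaProd := by
    nlinarith [gamma_nonneg, gamma_le_one]
  have main2 : gammaProd^2 * ((2:ℝ)^(ℓ*k) * ((2:ℝ)^(a*k) * 2^ℓ)) ≤ (C:ℝ) := by
    have h1 : gammaProd^2 * ((2:ℝ)^(ℓ*k) * ((2:ℝ)^(a*k) * 2^ℓ))
        ≤ gammaProd * ((2:ℝ)^(ℓ*k) * ((2:ℝ)^(a*k) * 2^ℓ)) :=
      mul_le_mul_of_nonneg_right hg2 (by positivity)
    have h2 : gammaProd * ((2:ℝ)^(ℓ*k) * ((2:ℝ)^(a*k) * 2^ℓ)) ≤ (C:ℝ) := by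
      calc gammaProd * ((2:ℝ)^(ℓ*k) * ((2:ℝ)^(a*k) * 2^ℓ))
          = gammaProd * 2^(ℓ*k) * ((2:ℝ)^(a*k) * 2^ℓ) := by ring
        _ ≤ (C:ℝ) := c1
    exact h1.trans h2
  rw [card_Lin]
  push_cast
  rw [le_div_iff₀ (by positivity)]
  have hexp : ((2:ℝ)^(k+a)/(2:ℝ)^ℓ)^a * ((2:ℝ)^(a^2))⁻¹ * (2:ℝ)^(ℓ*(k+a+1))
      = (2:ℝ)^(ℓ*k) * ((2:ℝ)^(a*k) * 2^ℓ) := by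
    rw [div_pow, ← pow_mul, ← pow_mul]
    rw [show ((2:ℝ)^((k+a)*a) / 2^(ℓ*a)) * ((2:ℝ)^(a^2))⁻¹ * (2:ℝ)^(ℓ*(k+a+1))
        = ((2:ℝ)^((k+a)*a) * 2^(ℓ*(k+a+1))) / (2^(ℓ*a) * 2^(a^2)) from by ring]
    rw [div_eq_iff (by positivity)]
    simp only [← pow_add]
    congr 1
    ring
  calc gammaProd ^ 2 * ((2:ℝ)^(k+a) / (2:ℝ)^ℓ) ^ a * ((2 : ℝ) ^ (a ^ 2))⁻¹ * (2:ℝ)^(ℓ*(k+a+1))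
      = gammaProd^2 * (((2:ℝ)^(k+a)/(2:ℝ)^ℓ)^a * ((2:ℝ)^(a^2))⁻¹ * (2:ℝ)^(ℓ*(k+a+1))) := by
        ring
    _ = gammaProd^2 * ((2:ℝ)^(ℓ*k) * ((2:ℝ)^(a*k) * 2^ℓ)) := by rw [hexp]
    _ ≤ (C:ℝ) := main2

/-- Let n = 2^ℓ, m = 2^d, λ = m/n = 2^{d-ℓ}, and let a be an integer with
d ≥ a ≥ max{1, d - ℓ}. Then there exist N and a set S ⊆ F_2^N of m distinct nonzero vectors such
that, for a uniformly random linear map h : F_2^N → F_2^ℓ,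
Pr[|{x ∈ S : h(x) = 0}| > 2^a - 2] ≥ γ^2 λ^a 2^{-a^2}, where γ = ∏_{j=1}^∞ (1 - 2^{-j}). -/
theorem stmt_15 (ℓ d n m : ℕ) (hn : n = 2 ^ ℓ) (hm : m = 2 ^ d)
    (lam : ℝ) (hlam : lam = (m : ℝ) / n)
    (a : ℕ) (ha1 : 1 ≤ a) (had : a ≤ d) (hadl : d - ℓ ≤ a) :
    ∃ (N : ℕ) (S : Finset (Fin N → ZMod 2)),
      S.card = m ∧ (0 : Fin N → ZMod 2) ∉ S ∧
      gammaProd ^ 2 * lam ^ a * ((2 : ℝ) ^ (a ^ 2))⁻¹ ≤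
        (Nat.card {h : Lin N ℓ // 2 ^ a - 2 < (S.filter (fun x => h x = 0)).card} : ℝ) /
          (Nat.card (Lin N ℓ) : ℝ) := by
  have hkl : d - a ≤ ℓ := by omega
  obtain ⟨S, hS1, hS2, hS3⟩ := main_aux ℓ (d - a) a ha1 hkl
  refine ⟨d - a + a + 1, S, ?_, hS2, ?_⟩
  · rw [hS1, hm, Nat.sub_add_cancel had]
  · have hlam' : lam = (2:ℝ)^(d - a + a) / (2:ℝ)^ℓ := by
      rw [hlam, hm, hn, Nat.sub_add_cancel had]
      push_cast
      ring
    rw [hlam']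
    exact hS3
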